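/- Let G = (1/N)∑_{i=1}^N G_i where each G_i: ℝ^d → ℝ is L-smooth with ‖∇G_i(x)‖ ≤ σ for all x. Let θ, θ̃ ∈ ℝ^d, let B be a uniformly random subset (or i.i.d. sample) of size n from {1,…,N}, c ∈ ℝ, and define u = (1/n)∑_{i∈B}(∇G_i(θ) − c∇G_i(θ̃)) + c∇G(θ̃). Then E[‖u‖²] ≤ 2‖∇G(θ)‖² + (4c²L²/n)‖θ − θ̃‖² + (4(1−c)²/n)σ². -/

import Mathlib

open MeasureTheory ProbabilityTheory
open scoped RealInnerProductSpace

section Aux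

variable {Ω : Type*} [MeasurableSpace Ω] {μ : Measure Ω} [IsProbabilityMeasure μ]

/-- Any composition of a function on a finite discrete space with a measurable map is
integrable with respect to a probability measure. -/
lemma agent_integrable_comp {α : Type*} [Fintype α] [MeasurableSpace α]
    [MeasurableSingletonClass α] {φ : Ω → α} (hφ : Measurable φ) (F : α → ℝ) :
    Integrable (fun ω => F (φ ω)) μ := by
  have h : IsProbabilityMeasure (μ.map φ) := Measure.isProbabilityMeasure_map hφ.aemeasurable
  exact (integrable_map_measure (measurable_of_countable F).aestronglyMeasurable
    hφ.aemeasurable).mp .of_finite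

/-- Expectation of a function of a uniformly distributed random index. -/
lemma agent_exp_single {N : ℕ} [NeZero N] {X : Ω → Fin N} (hX : Measurable X)
    (hu : Measure.map X μ = (PMF.uniformOfFintype (Fin N)).toMeasure) (F : Fin N → ℝ) :
    ∫ ω, F (X ω) ∂μ = (N : ℝ)⁻¹ * ∑ i, F i := by
  rw [← integral_map hX.aemeasurable (measurable_of_countable F).aestronglyMeasurable, hu,
    PMF.integral_eq_sum]
  simp only [PMF.uniformOfFintype_apply, Fintype.card_fin, ENNReal.toReal_inv,
    ENNReal.toReal_natCast, smul_eq_mul]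
  rw [Finset.mul_sum]

/-- Expectation of a function of two independent uniformly distributed random indices. -/
lemma agent_exp_pair {N : ℕ} [NeZero N] {X Y : Ω → Fin N} (hX : Measurable X)
    (hY : Measurable Y)
    (huX : Measure.map X μ = (PMF.uniformOfFintype (Fin N)).toMeasure)
    (huY : Measure.map Y μ = (PMF.uniformOfFintype (Fin N)).toMeasure)
    (hind : IndepFun X Y μ) (F : Fin N → Fin N → ℝ) :
    ∫ ω, F (X ω) (Y ω) ∂μ = (N : ℝ)⁻¹ * ∑ i, ((N : ℝ)⁻¹ * ∑ i', F i i') := by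
  have hmap : μ.map (fun ω => (X ω, Y ω)) = (μ.map X).prod (μ.map Y) :=
    (indepFun_iff_map_prod_eq_prod_map_map hX.aemeasurable hY.aemeasurable).mp hind
  have h1 : ∫ ω, F (X ω) (Y ω) ∂μ
      = ∫ p : Fin N × Fin N, F p.1 p.2 ∂((μ.map X).prod (μ.map Y)) := by
    rw [← hmap,
      integral_map (hX.aemeasurable.prodMk hY.aemeasurable)
        (measurable_of_countable fun p : Fin N × Fin N => F p.1 p.2).aestronglyMeasurable]
  rw [h1, huX, huY, MeasureTheory.integral_prod _ (Integrable.of_finite)]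
  simp only [PMF.integral_eq_sum, PMF.uniformOfFintype_apply, Fintype.card_fin,
    ENNReal.toReal_inv, ENNReal.toReal_natCast, smul_eq_mul]
  simp only [Finset.mul_sum]

end Aux

set_option maxHeartbeats 1000000 in
theorem agent_gradient_estimator_second_moment
    {Ω : Type*} [MeasurableSpace Ω] (μ : Measure Ω) [IsProbabilityMeasure μ]
    {d N n : ℕ} [NeZero N] (hn : 0 < n)
    (Gi : Fin N → EuclideanSpace ℝ (Fin d) → ℝ) (L σ : ℝ)
    (hdiff : ∀ i, Differentiable ℝ (Gi i))
    (hL : ∀ i x y, ‖gradient (Gi i) x - gradient (Gi i) y‖ ≤ L * ‖x - y‖)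
    (hσ : ∀ i x, ‖gradient (Gi i) x‖ ≤ σ)
    (θ θt : EuclideanSpace ℝ (Fin d)) (c : ℝ)
    (B : Fin n → Ω → Fin N)
    (hmeas : ∀ j, Measurable (B j))
    (hunif : ∀ j, Measure.map (B j) μ = (PMF.uniformOfFintype (Fin N)).toMeasure)
    (hindep : iIndepFun B μ) :
    ∫ ω, ‖(n : ℝ)⁻¹ • (∑ j : Fin n,
            (gradient (Gi (B j ω)) θ - c • gradient (Gi (B j ω)) θt))
          + c • ((N : ℝ)⁻¹ • ∑ i : Fin N, gradient (Gi i) θt)‖ ^ 2 ∂μ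
      ≤ 2 * ‖(N : ℝ)⁻¹ • ∑ i : Fin N, gradient (Gi i) θ‖ ^ 2
        + (4 * c ^ 2 * L ^ 2 / n) * ‖θ - θt‖ ^ 2
        + (4 * (1 - c) ^ 2 / n) * σ ^ 2 := by
  have hNpos : (0 : ℝ) < N := by
    exact_mod_cast Nat.pos_of_ne_zero (NeZero.ne N)
  have hnpos : (0 : ℝ) < n := by exact_mod_cast hn
  set g : Fin N → EuclideanSpace ℝ (Fin d) :=
    fun i => gradient (Gi i) θ - c • gradient (Gi i) θt with hg
  set a : EuclideanSpace ℝ (Fin d) := (N : ℝ)⁻¹ • ∑ i, gradient (Gi i) θ with ha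
  set b : EuclideanSpace ℝ (Fin d) := (N : ℝ)⁻¹ • ∑ i, gradient (Gi i) θt with hb
  set m : EuclideanSpace ℝ (Fin d) := (N : ℝ)⁻¹ • ∑ i, g i with hm
  set Z : Fin N → EuclideanSpace ℝ (Fin d) := fun i => g i - m with hZ
  have hsg : ∑ i, g i = (N : ℝ) • m := by
    rw [hm, smul_smul, mul_inv_cancel₀ hNpos.ne', one_smul]
  have hZsum : ∑ i, Z i = 0 := by
    simp only [hZ, Finset.sum_sub_distrib, Finset.sum_const, Finset.card_univ, Fintype.card_fin]
    rw [← Nat.cast_smul_eq_nsmul ℝ, ← hsg, sub_self]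
  have hmab : a = m + c • b := by
    have : m = a - c • b := by
      rw [hm, ha, hb]
      simp only [hg, Finset.sum_sub_distrib, ← Finset.smul_sum]
      rw [smul_sub, smul_comm]
    rw [this]; abel
  -- pointwise rewrite of the integrand
  have hpt : ∀ ω, (n : ℝ)⁻¹ • (∑ j : Fin n,
        (gradient (Gi (B j ω)) θ - c • gradient (Gi (B j ω)) θt)) + c • b
      = a + (n : ℝ)⁻¹ • ∑ j : Fin n, Z (B j ω) := by
    intro ω
    show (n : ℝ)⁻¹ • (∑ j : Fin n, g (B j ω)) + c • b = _
    have h1 : ∑ j : Fin n, Z (B j ω) = (∑ j : Fin n, g (B j ω)) - (n : ℝ) • m := by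
      simp only [hZ, Finset.sum_sub_distrib, Finset.sum_const, Finset.card_univ,
        Fintype.card_fin, Nat.cast_smul_eq_nsmul]
    have h2 : (n : ℝ)⁻¹ • ((n : ℝ) • m) = m := by
      rw [smul_smul, inv_mul_cancel₀ hnpos.ne', one_smul]
    rw [h1, smul_sub, h2, hmab]
    abel
  have hexp : ∀ ω, ‖a + (n : ℝ)⁻¹ • ∑ j : Fin n, Z (B j ω)‖ ^ 2
      = ‖a‖ ^ 2 + 2 * ((n : ℝ)⁻¹ * ∑ j : Fin n, ⟪a, Z (B j ω)⟫)
        + ((n : ℝ)⁻¹) ^ 2 * ∑ j : Fin n, ∑ k : Fin n, ⟪Z (B j ω), Z (B k ω)⟫ := by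
    intro ω
    rw [norm_add_sq_real, real_inner_smul_right, inner_sum,
      norm_smul ((n : ℝ)⁻¹) (∑ j : Fin n, Z (B j ω)), mul_pow, Real.norm_eq_abs, sq_abs,
      ← real_inner_self_eq_norm_sq (∑ j : Fin n, Z (B j ω)), sum_inner]
    simp only [inner_sum]
  -- integrability
  have hint1 : ∀ j, Integrable (fun ω => ⟪a, Z (B j ω)⟫) μ := fun j =>
    agent_integrable_comp (hmeas j) (fun i => ⟪a, Z i⟫)
  have hint2 : ∀ j k, Integrable (fun ω => ⟪Z (B j ω), Z (B k ω)⟫) μ := fun j k =>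
    agent_integrable_comp ((hmeas j).prodMk (hmeas k))
      (fun p : Fin N × Fin N => ⟪Z p.1, Z p.2⟫)
  have I1 : Integrable (fun ω => 2 * ((n : ℝ)⁻¹ * ∑ j : Fin n, ⟪a, Z (B j ω)⟫)) μ :=
    ((integrable_finset_sum _ fun j _ => hint1 j).const_mul _).const_mul 2
  have I2 : Integrable (fun ω =>
      ((n : ℝ)⁻¹) ^ 2 * ∑ j : Fin n, ∑ k : Fin n, ⟪Z (B j ω), Z (B k ω)⟫) μ :=
    (integrable_finset_sum _ fun j _ => integrable_finset_sum _ fun k _ => hint2 j k).const_mul _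
  -- individual expectations
  have hf0 : ∀ j, ∫ ω, ⟪a, Z (B j ω)⟫ ∂μ = 0 := by
    intro j
    rw [agent_exp_single (hmeas j) (hunif j) (fun i => ⟪a, Z i⟫)]
    rw [← inner_sum, hZsum, inner_zero_right, mul_zero]
  have hjk : ∀ j k, j ≠ k → ∫ ω, ⟪Z (B j ω), Z (B k ω)⟫ ∂μ = 0 := by
    intro j k hjkne
    rw [agent_exp_pair (hmeas j) (hmeas k) (hunif j) (hunif k) (hindep.indepFun hjkne)
      (fun i i' => ⟪Z i, Z i'⟫)]
    have h0 : ∀ i : Fin N, ∑ i', ⟪Z i, Z i'⟫ = 0 := fun i => by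
      rw [← inner_sum, hZsum, inner_zero_right]
    simp only [h0, mul_zero, Finset.sum_const_zero]
  have hjj : ∀ j, ∫ ω, ⟪Z (B j ω), Z (B j ω)⟫ ∂μ = (N : ℝ)⁻¹ * ∑ i, ‖Z i‖ ^ 2 := by
    intro j
    rw [agent_exp_single (hmeas j) (hunif j) (fun i => ⟪Z i, Z i⟫)]
    simp only [real_inner_self_eq_norm_sq]
  have hdouble : ∑ j : Fin n, ∑ k : Fin n, ∫ ω, ⟪Z (B j ω), Z (B k ω)⟫ ∂μ
      = (n : ℝ) * ((N : ℝ)⁻¹ * ∑ i, ‖Z i‖ ^ 2) := by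
    have hrow : ∀ j : Fin n, ∑ k : Fin n, ∫ ω, ⟪Z (B j ω), Z (B k ω)⟫ ∂μ
        = (N : ℝ)⁻¹ * ∑ i, ‖Z i‖ ^ 2 := by
      intro j
      rw [Finset.sum_eq_single j (fun k _ hk => hjk j k (Ne.symm hk))
        (fun h => absurd (Finset.mem_univ j) h)]
      exact hjj j
    simp only [hrow, Finset.sum_const, Finset.card_univ, Fintype.card_fin, nsmul_eq_mul]
  -- the key identity for the second moment
  have hkey : ∫ ω, ‖(n : ℝ)⁻¹ • (∑ j : Fin n,
        (gradient (Gi (B j ω)) θ - c • gradient (Gi (B j ω)) θt)) + c • b‖ ^ 2 ∂μ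
      = ‖a‖ ^ 2 + (n : ℝ)⁻¹ * ((N : ℝ)⁻¹ * ∑ i, ‖Z i‖ ^ 2) := by
    have : ∀ ω, ‖(n : ℝ)⁻¹ • (∑ j : Fin n,
          (gradient (Gi (B j ω)) θ - c • gradient (Gi (B j ω)) θt)) + c • b‖ ^ 2
        = ‖a‖ ^ 2 + 2 * ((n : ℝ)⁻¹ * ∑ j : Fin n, ⟪a, Z (B j ω)⟫)
          + ((n : ℝ)⁻¹) ^ 2 * ∑ j : Fin n, ∑ k : Fin n, ⟪Z (B j ω), Z (B k ω)⟫ := by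
      intro ω; rw [hpt ω, hexp ω]
    calc ∫ ω, ‖(n : ℝ)⁻¹ • (∑ j : Fin n,
          (gradient (Gi (B j ω)) θ - c • gradient (Gi (B j ω)) θt)) + c • b‖ ^ 2 ∂μ
        = ∫ ω, (‖a‖ ^ 2 + 2 * ((n : ℝ)⁻¹ * ∑ j : Fin n, ⟪a, Z (B j ω)⟫)
            + ((n : ℝ)⁻¹) ^ 2 * ∑ j : Fin n, ∑ k : Fin n, ⟪Z (B j ω), Z (B k ω)⟫) ∂μ := by
          exact integral_congr_ae (Filter.Eventually.of_forall this)
      _ = ‖a‖ ^ 2 + (n : ℝ)⁻¹ * ((N : ℝ)⁻¹ * ∑ i, ‖Z i‖ ^ 2) := by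
          have I0 : Integrable (fun ω => ‖a‖ ^ 2
              + 2 * ((n : ℝ)⁻¹ * ∑ j : Fin n, ⟪a, Z (B j ω)⟫)) μ :=
            (integrable_const _).add I1
          rw [integral_add I0 I2, integral_add (integrable_const _) I1,
            integral_const, integral_const_mul, integral_const_mul,
            integral_finset_sum _ (fun j _ => hint1 j), integral_const_mul,
            integral_finset_sum _ (fun j _ => integrable_finset_sum _ fun k _ => hint2 j k)]
          simp only [hf0, Finset.sum_const_zero, mul_zero, add_zero]
          have : ∑ j : Fin n, ∫ ω, (∑ k : Fin n, ⟪Z (B j ω), Z (B k ω)⟫) ∂μ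
              = ∑ j : Fin n, ∑ k : Fin n, ∫ ω, ⟪Z (B j ω), Z (B k ω)⟫ ∂μ :=
            Finset.sum_congr rfl fun j _ => integral_finset_sum _ fun k _ => hint2 j k
          rw [this, hdouble, probReal_univ]
          have hne : (n : ℝ) ≠ 0 := hnpos.ne'
          field_simp
          ring
  -- bound on the variance term
  have hσnn : 0 ≤ σ := le_trans (norm_nonneg _) (hσ ⟨0, Nat.pos_of_ne_zero (NeZero.ne N)⟩ θ)
  have hDnn : 0 ≤ L * ‖θ - θt‖ :=
    le_trans (norm_nonneg _) (hL ⟨0, Nat.pos_of_ne_zero (NeZero.ne N)⟩ θ θt)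
  have hZg : ∑ i, ‖Z i‖ ^ 2 ≤ ∑ i, ‖g i‖ ^ 2 := by
    have h1 : ∀ i, ‖Z i‖ ^ 2 = ‖g i‖ ^ 2 - 2 * ⟪g i, m⟫ + ‖m‖ ^ 2 := fun i =>
      norm_sub_sq_real _ _
    have h2 : ∑ i, ⟪g i, m⟫ = (N : ℝ) * ‖m‖ ^ 2 := by
      rw [← sum_inner, hsg, real_inner_smul_left, real_inner_self_eq_norm_sq]
    have h3 : ∑ i, ‖Z i‖ ^ 2 = ∑ i, ‖g i‖ ^ 2 - (N : ℝ) * ‖m‖ ^ 2 := by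
      simp only [h1]
      rw [Finset.sum_add_distrib, Finset.sum_sub_distrib, ← Finset.mul_sum, h2,
        Finset.sum_const, Finset.card_univ, Fintype.card_fin, nsmul_eq_mul]
      ring
    nlinarith [mul_nonneg hNpos.le (sq_nonneg ‖m‖)]
  have hgb : ∀ i, ‖g i‖ ^ 2 ≤ 2 * (1 - c) ^ 2 * σ ^ 2 + 2 * c ^ 2 * L ^ 2 * ‖θ - θt‖ ^ 2 := by
    intro i
    have hdecomp : g i = (1 - c) • gradient (Gi i) θ
        + c • (gradient (Gi i) θ - gradient (Gi i) θt) := by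
      rw [hg]
      simp only [smul_sub, sub_smul, one_smul]
      abel
    have h1 : ‖g i‖ ≤ |1 - c| * σ + |c| * (L * ‖θ - θt‖) := by
      rw [hdecomp]
      refine (norm_add_le _ _).trans ?_
      rw [norm_smul, norm_smul, Real.norm_eq_abs, Real.norm_eq_abs]
      exact add_le_add (mul_le_mul_of_nonneg_left (hσ i θ) (abs_nonneg _))
        (mul_le_mul_of_nonneg_left (hL i θ θt) (abs_nonneg _))
    have h2 : ‖g i‖ ^ 2 ≤ (|1 - c| * σ + |c| * (L * ‖θ - θt‖)) ^ 2 :=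
      pow_le_pow_left₀ (norm_nonneg _) h1 2
    have e1 : |1 - c| ^ 2 * σ ^ 2 = (1 - c) ^ 2 * σ ^ 2 := by rw [sq_abs]
    have e2 : |c| ^ 2 * (L * ‖θ - θt‖) ^ 2 = c ^ 2 * (L * ‖θ - θt‖) ^ 2 := by rw [sq_abs]
    nlinarith [h2, e1, e2, sq_nonneg (|1 - c| * σ - |c| * (L * ‖θ - θt‖))]
  have hVC : (N : ℝ)⁻¹ * ∑ i, ‖Z i‖ ^ 2
      ≤ 2 * (1 - c) ^ 2 * σ ^ 2 + 2 * c ^ 2 * L ^ 2 * ‖θ - θt‖ ^ 2 := by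
    have h4 : ∑ i, ‖g i‖ ^ 2
        ≤ (N : ℝ) * (2 * (1 - c) ^ 2 * σ ^ 2 + 2 * c ^ 2 * L ^ 2 * ‖θ - θt‖ ^ 2) := by
      calc ∑ i, ‖g i‖ ^ 2
          ≤ ∑ _i : Fin N, (2 * (1 - c) ^ 2 * σ ^ 2 + 2 * c ^ 2 * L ^ 2 * ‖θ - θt‖ ^ 2) :=
            Finset.sum_le_sum fun i _ => hgb i
        _ = (N : ℝ) * (2 * (1 - c) ^ 2 * σ ^ 2 + 2 * c ^ 2 * L ^ 2 * ‖θ - θt‖ ^ 2) := by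
            rw [Finset.sum_const, Finset.card_univ, Fintype.card_fin, nsmul_eq_mul]
    calc (N : ℝ)⁻¹ * ∑ i, ‖Z i‖ ^ 2
        ≤ (N : ℝ)⁻¹ * ((N : ℝ) * (2 * (1 - c) ^ 2 * σ ^ 2
            + 2 * c ^ 2 * L ^ 2 * ‖θ - θt‖ ^ 2)) := by
          exact mul_le_mul_of_nonneg_left (le_trans hZg h4) (by positivity)
      _ = 2 * (1 - c) ^ 2 * σ ^ 2 + 2 * c ^ 2 * L ^ 2 * ‖θ - θt‖ ^ 2 := by
          field_simp
  rw [hkey, div_eq_mul_inv, div_eq_mul_inv]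
  have hinv : (0 : ℝ) ≤ (n : ℝ)⁻¹ := by positivity
  nlinarith [sq_nonneg ‖a‖, mul_le_mul_of_nonneg_left hVC hinv,
    mul_nonneg hinv (mul_nonneg (mul_nonneg (sq_nonneg c) (sq_nonneg L)) (sq_nonneg ‖θ - θt‖)),
    mul_nonneg hinv (mul_nonneg (sq_nonneg (1 - c)) (sq_nonneg σ))]
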